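/- Let M be a compact metric space, f: M → M a homeomorphism, and μ an f-invariant ergodic Borel probability measure on M. Suppose there exist a measurable set Λ ⊆ M and constants R > 0, C > 0, 0 < c < 1 such that μ(Λ) > 1/2 and, for every p ∈ Λ, every q ∈ M with d(p,q) ≤ R, and every m ≥ 0, one has d(f^m(p), f^m(q)) ≤ C c^m d(p,q). Then μ is concentrated on a single periodic orbit: there exist a point p ∈ M and an integer n ≥ 1 with f^n(p) = p, such that the orbit P = {p, f(p), …, f^{n-1}(p)} satisfies μ(P) = 1 and μ({f^i(p)}) = 1/n for each i. -/

import Mathlib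

open MeasureTheory Set
open scoped ENNReal

/-- **Corollary to Theorem II (contraction-hypothesis form).** An ergodic invariant measure
for a homeomorphism of a compact metric space which contracts exponentially near a set of
measure `> 1/2` is concentrated on a single periodic orbit, with equal weights `1/n`. -/
theorem ergodic_contracting_measure_on_periodic_orbit
    {M : Type*} [MetricSpace M] [CompactSpace M] [MeasurableSpace M] [BorelSpace M]
    (f : M → M) (hcont : Continuous f) (hbij : Function.Bijective f)
    (μ : Measure M) [IsProbabilityMeasure μ]
    (hinv : MeasurePreserving f μ μ) (herg : Ergodic f μ)
    (Λ : Set M) (hΛmeas : MeasurableSet Λ)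
    (R C c : ℝ) (hR : 0 < R) (hC : 0 < C) (hc0 : 0 < c) (hc1 : c < 1)
    (hΛμ : 1 / 2 < μ Λ)
    (hcontr : ∀ p ∈ Λ, ∀ q : M, dist p q ≤ R → ∀ m : ℕ,
      dist (f^[m] p) (f^[m] q) ≤ C * c ^ m * dist p q) :
    ∃ (p : M) (n : ℕ), 1 ≤ n ∧ f^[n] p = p ∧
      μ {q : M | ∃ i < n, q = f^[i] p} = 1 ∧
      ∀ i < n, μ {f^[i] p} = (n : ℝ≥0∞)⁻¹ := by
  classical
  have hfm : Measurable f := hcont.measurable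
  have hΛpos : 0 < μ Λ := lt_of_le_of_lt zero_le hΛμ
  -- Step 1: find a ball of radius R/2 meeting Λ in positive measure
  have hR2 : (0 : ℝ) < R / 2 := by linarith
  obtain ⟨t, ht⟩ := isCompact_univ.elim_finite_subcover
    (fun z : M => Metric.ball z (R / 2)) (fun z => Metric.isOpen_ball)
    (fun q _ => mem_iUnion.2 ⟨q, Metric.mem_ball_self hR2⟩)
  have hz : ∃ z ∈ t, 0 < μ (Λ ∩ Metric.ball z (R / 2)) := by
    by_contra h
    push_neg at h
    have hcov : Λ ⊆ ⋃ z ∈ t, Λ ∩ Metric.ball z (R / 2) := by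
      intro q hq
      obtain ⟨z, hz1, hz2⟩ := mem_iUnion₂.1 (ht (mem_univ q))
      exact mem_iUnion₂.2 ⟨z, hz1, hq, hz2⟩
    have : μ Λ ≤ ∑ z ∈ t, μ (Λ ∩ Metric.ball z (R / 2)) :=
      le_trans (measure_mono hcov) (measure_biUnion_finset_le t _)
    have hzero : ∑ z ∈ t, μ (Λ ∩ Metric.ball z (R / 2)) = 0 :=
      Finset.sum_eq_zero fun z hzt => le_antisymm (h z hzt) zero_le
    rw [hzero] at this
    exact absurd (le_antisymm this zero_le) (ne_of_gt hΛpos)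
  obtain ⟨z, -, hzpos⟩ := hz
  set s : Set M := Λ ∩ Metric.ball z (R / 2) with hs_def
  have hsmeas : MeasurableSet s := hΛmeas.inter Metric.isOpen_ball.measurableSet
  -- Step 2: Poincaré recurrence gives p ∈ s returning to s
  have hrec := hinv.conservative.ae_mem_imp_frequently_image_mem hsmeas.nullMeasurableSet
  have hppos : 0 < μ {q ∈ s | ∃ᶠ n in Filter.atTop, f^[n] q ∈ s} := by
    have : μ s ≤ μ {q ∈ s | ∃ᶠ n in Filter.atTop, f^[n] q ∈ s} := by
      apply measure_mono_ae
      filter_upwards [hrec] with q hq hqs using ⟨hqs, hq hqs⟩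
    exact lt_of_lt_of_le hzpos this
  obtain ⟨p, hps, hpfreq⟩ : ∃ p, p ∈ s ∧ ∃ᶠ n in Filter.atTop, f^[n] p ∈ s := by
    rcases nonempty_of_measure_ne_zero (ne_of_gt hppos) with ⟨p, hp1, hp2⟩
    exact ⟨p, hp1, hp2⟩
  obtain ⟨n, hn1, hfns⟩ : ∃ n, 1 ≤ n ∧ f^[n] p ∈ s := Filter.frequently_atTop.1 hpfreq 1
  have hpΛ : p ∈ Λ := hps.1
  have hdist : dist p (f^[n] p) ≤ R := by
    have h1 : dist p z < R / 2 := hps.2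
    have h2 : dist (f^[n] p) z < R / 2 := hfns.2
    calc dist p (f^[n] p) ≤ dist p z + dist z (f^[n] p) := dist_triangle _ _ _
      _ ≤ R / 2 + R / 2 := by rw [dist_comm z]; linarith
      _ = R := by ring
  have hn0 : 0 < n := hn1
  have hcn1 : c ^ n < 1 := pow_lt_one₀ hc0.le hc1 (by omega)
  have hcn0 : (0 : ℝ) ≤ c ^ n := (pow_pos hc0 n).le
  -- Step 3: the limit point x of f^[k*n] p
  set u : ℕ → M := fun k => f^[k * n] p with hu_def
  have hukey : ∀ q : M, dist p q ≤ R → ∀ k : ℕ,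
      dist (u k) (f^[k * n] q) ≤ C * R * (c ^ n) ^ k := by
    intro q hq k
    have := hcontr p hpΛ q hq (k * n)
    have h2 : C * c ^ (k * n) * dist p q ≤ C * c ^ (k * n) * R :=
      mul_le_mul_of_nonneg_left hq (by positivity)
    have h3 : c ^ (k * n) = (c ^ n) ^ k := by
      rw [← pow_mul, Nat.mul_comm]
    calc dist (u k) (f^[k * n] q) ≤ C * c ^ (k * n) * dist p q := this
      _ ≤ C * c ^ (k * n) * R := h2
      _ = C * R * (c ^ n) ^ k := by rw [h3]; ring
  have hstep : ∀ k : ℕ, dist (u k) (u (k + 1)) ≤ C * R * (c ^ n) ^ k := by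
    intro k
    have : u (k + 1) = f^[k * n] (f^[n] p) := by
      simp only [hu_def]
      rw [Nat.succ_mul, Function.iterate_add_apply]
    rw [this]
    exact hukey (f^[n] p) hdist k
  have hcauchy : CauchySeq u := cauchySeq_of_le_geometric (c ^ n) (C * R) hcn1 hstep
  obtain ⟨x, hx⟩ := cauchySeq_tendsto_of_complete hcauchy
  -- x is periodic of period n
  have hfix : f^[n] x = x := by
    have h1 : Filter.Tendsto (fun k => u (k + 1)) Filter.atTop (nhds x) :=
      hx.comp (Filter.tendsto_add_atTop_nat 1)
    have h2 : Filter.Tendsto (fun k => f^[n] (u k)) Filter.atTop (nhds (f^[n] x)) :=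
      ((hcont.iterate n).tendsto x).comp hx
    have h3 : (fun k => u (k + 1)) = fun k => f^[n] (u k) := by
      funext k
      simp only [hu_def]
      rw [Nat.succ_mul, Nat.add_comm, Function.iterate_add_apply]
    rw [h3] at h1
    exact tendsto_nhds_unique h2 h1
  have hper : Function.IsPeriodicPt f n x := hfix
  -- Step 4: basin of attraction
  have hbasin : ∀ q : M, dist p q ≤ R →
      Filter.Tendsto (fun k => f^[k * n] q) Filter.atTop (nhds x) := by
    intro q hq
    rw [tendsto_iff_dist_tendsto_zero]
    apply squeeze_zero (fun k => dist_nonneg)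
      (g := fun k => C * R * (c ^ n) ^ k + dist (u k) x)
    · intro k
      calc dist (f^[k * n] q) x ≤ dist (f^[k * n] q) (u k) + dist (u k) x :=
            dist_triangle _ _ _
        _ ≤ C * R * (c ^ n) ^ k + dist (u k) x := by
            have := hukey q hq k
            rw [dist_comm]
            linarith
    · have hg : Filter.Tendsto (fun k : ℕ => C * R * (c ^ n) ^ k) Filter.atTop (nhds 0) := by
        rw [show (0 : ℝ) = C * R * 0 by ring]
        exact (tendsto_pow_atTop_nhds_zero_of_lt_one hcn0 hcn1).const_mul _
      have hd : Filter.Tendsto (fun k => dist (u k) x) Filter.atTop (nhds 0) :=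
        tendsto_iff_dist_tendsto_zero.1 hx
      simpa using hg.add hd
  -- the orbit
  set O : Set M := {q : M | ∃ i < n, q = f^[i] x} with hO_def
  have hOim : O = (fun i : ℕ => f^[i] x) '' (Iio n) := by
    ext q
    simp only [hO_def, mem_setOf_eq, mem_image, mem_Iio]
    constructor
    · rintro ⟨i, hi, rfl⟩; exact ⟨i, hi, rfl⟩
    · rintro ⟨i, hi, rfl⟩; exact ⟨i, hi, rfl⟩
  have hOfin : O.Finite := by
    rw [hOim]; exact (finite_Iio n).image _
  have hOclosed : IsClosed O := hOfin.isClosed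
  have hOmeas : MeasurableSet O := hOfin.measurableSet
  have hOmem : ∀ i : ℕ, f^[i] x ∈ O := by
    intro i
    exact ⟨i % n, Nat.mod_lt _ hn0, (hper.iterate_mod_apply i).symm⟩
  -- Step 5: invariant full-measure basin set
  set W : ℕ → Set M := fun i =>
    {q : M | Filter.Tendsto (fun k => f^[k * n] q) Filter.atTop (nhds (f^[i] x))} with hW_def
  set Wst : Set M := ⋃ i : ℕ, W i with hWst_def
  have hWmeas : MeasurableSet Wst := by
    apply MeasurableSet.iUnion
    intro i
    exact measurableSet_tendsto_fun (fun k => hfm.iterate (k * n)) measurable_const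
  -- homeomorphism structure
  set e : M ≃ₜ M := Continuous.homeoOfEquivCompactToT2
    (f := Equiv.ofBijective f hbij) hcont with he_def
  have he_app : ∀ q : M, e q = f q := fun q => rfl
  have he_symm : ∀ q : M, e.symm (f q) = q := fun q => by
    rw [← he_app]; exact e.symm_apply_apply q
  have hWinv : f ⁻¹' Wst = Wst := by
    ext q
    simp only [mem_preimage, hWst_def, mem_iUnion, hW_def, mem_setOf_eq]
    constructor
    · rintro ⟨i, hi⟩
      refine ⟨n - 1 + i, ?_⟩
      have hiter : ∀ k : ℕ, f^[k * n] (f q) = f (f^[k * n] q) := by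
        intro k
        rw [← Function.iterate_succ_apply, Function.iterate_succ_apply']
      rw [show (fun k => f^[k * n] (f q)) = fun k => f (f^[k * n] q) from funext hiter] at hi
      have hsymm : Filter.Tendsto (fun k => e.symm (f (f^[k * n] q))) Filter.atTop
          (nhds (e.symm (f^[i] x))) := (e.continuous_symm.tendsto _).comp hi
      simp only [he_symm] at hsymm
      have hval : e.symm (f^[i] x) = f^[n - 1 + i] x := by
        apply hbij.injective
        rw [← he_app, e.apply_symm_apply,
          ← Function.iterate_succ_apply' f (n - 1 + i) x]
        have h5 : (n - 1 + i).succ = i + n := by omega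
        rw [h5, Function.iterate_add_apply, hfix]
      rwa [hval] at hsymm
    · rintro ⟨i, hi⟩
      refine ⟨i + 1, ?_⟩
      have hiter : ∀ k : ℕ, f^[k * n] (f q) = f (f^[k * n] q) := by
        intro k
        rw [← Function.iterate_succ_apply, Function.iterate_succ_apply']
      rw [show (fun k => f^[k * n] (f q)) = fun k => f (f^[k * n] q) from funext hiter]
      rw [Function.iterate_succ_apply']
      exact (hcont.tendsto _).comp hi
  have hWpos : 0 < μ Wst := by
    have hsub : s ⊆ Wst := by
      intro q hq
      refine mem_iUnion.2 ⟨0, ?_⟩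
      simp only [hW_def, mem_setOf_eq, Function.iterate_zero_apply]
      apply hbasin
      have h1 : dist p z < R / 2 := hps.2
      have h2 : dist q z < R / 2 := hq.2
      calc dist p q ≤ dist p z + dist z q := dist_triangle _ _ _
        _ ≤ R / 2 + R / 2 := by rw [dist_comm z]; linarith
        _ = R := by ring
    exact lt_of_lt_of_le hzpos (measure_mono hsub)
  have hWfull : μ Wst = 1 := by
    rcases herg.toPreErgodic.prob_eq_zero_or_one hWmeas hWinv with h | h
    · exact absurd h (ne_of_gt hWpos)
    · exact h
  -- Step 6: every thickening of O has full measure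
  have hthick : ∀ ε : ℝ, 0 < ε → μ (Metric.thickening ε O) = 1 := by
    intro ε hε
    set T := Metric.thickening ε O with hT_def
    have hTopen : IsOpen T := Metric.isOpen_thickening
    set B : ℕ → Set M := fun N => ⋂ k, ⋂ (_ : N ≤ k), f^[k * n] ⁻¹' T with hB_def
    have hBmeas : ∀ N, MeasurableSet (B N) := fun N =>
      MeasurableSet.iInter fun k => MeasurableSet.iInter fun _ =>
        (hfm.iterate (k * n)) hTopen.measurableSet
    have hBmono : Monotone B := by
      intro N N' hNN' q hq
      simp only [hB_def, mem_iInter] at hq ⊢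
      intro k hk
      exact hq k (le_trans hNN' hk)
    have hWsub : Wst ⊆ ⋃ N, B N := by
      intro q hq
      obtain ⟨i, hi⟩ := mem_iUnion.1 hq
      have hmem : f^[i] x ∈ T := Metric.self_subset_thickening hε O (hOmem i)
      have : ∀ᶠ k in Filter.atTop, f^[k * n] q ∈ T :=
        hi.eventually (hTopen.mem_nhds hmem)
      obtain ⟨N, hN⟩ := Filter.eventually_atTop.1 this
      exact mem_iUnion.2 ⟨N, by simp only [hB_def, mem_iInter, mem_preimage]; exact hN⟩
    have hBle : ∀ N, μ (B N) ≤ μ T := by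
      intro N
      have h1 : B N ⊆ f^[N * n] ⁻¹' T := fun q hq => by
        simp only [hB_def, mem_iInter] at hq
        exact hq N le_rfl
      calc μ (B N) ≤ μ (f^[N * n] ⁻¹' T) := measure_mono h1
        _ = μ T := (hinv.iterate (N * n)).measure_preimage
            hTopen.measurableSet.nullMeasurableSet
    have h1 : (1 : ℝ≥0∞) ≤ μ (⋃ N, B N) := by
      rw [← hWfull]; exact measure_mono hWsub
    rw [hBmono.measure_iUnion] at h1
    have h2 : ⨆ N, μ (B N) ≤ μ T := iSup_le hBle
    exact le_antisymm prob_le_one (le_trans h1 h2)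
  -- Step 7: μ O = 1
  have hO1 : μ O = 1 := by
    rw [← prob_compl_eq_zero_iff hOmeas]
    have hsub : Oᶜ ⊆ ⋃ m : ℕ, (Metric.thickening (1 / (m + 1)) O)ᶜ := by
      intro q hq
      by_contra h
      simp only [mem_iUnion, mem_compl_iff, not_exists, not_not] at h
      apply hq
      have : q ∈ closure O := by
        rw [Metric.mem_closure_iff]
        intro ε hε
        obtain ⟨m, hm⟩ := exists_nat_one_div_lt hε
        obtain ⟨y, hy, hyd⟩ := Metric.mem_thickening_iff.1 (h m)
        exact ⟨y, hy, lt_trans hyd hm⟩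
      rwa [hOclosed.closure_eq] at this
    have hle : μ Oᶜ ≤ ∑' m : ℕ, μ (Metric.thickening (1 / (m + 1 : ℝ)) O)ᶜ :=
      le_trans (measure_mono hsub) (measure_iUnion_le _)
    have hzero : ∀ m : ℕ, μ (Metric.thickening (1 / (m + 1 : ℝ)) O)ᶜ = 0 := by
      intro m
      rw [prob_compl_eq_zero_iff Metric.isOpen_thickening.measurableSet]
      exact hthick _ (by positivity)
    simp only [hzero, tsum_zero] at hle
    exact le_antisymm hle zero_le
  -- Step 8: minimal period and equal weights
  set m := Function.minimalPeriod f x with hm_def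
  have hm0 : 0 < m := hper.minimalPeriod_pos hn0
  have hmn : m ≤ n := hper.minimalPeriod_le hn0
  have hmmod : ∀ i : ℕ, f^[i % m] x = f^[i] x :=
    (Function.isPeriodicPt_minimalPeriod f x).iterate_mod_apply
  set P : Set M := {q : M | ∃ i < m, q = f^[i] x} with hP_def
  have hPO : P = O := by
    ext q
    simp only [hP_def, hO_def, mem_setOf_eq]
    constructor
    · rintro ⟨i, hi, rfl⟩; exact ⟨i, lt_of_lt_of_le hi hmn, rfl⟩
    · rintro ⟨i, hi, rfl⟩
      exact ⟨i % m, Nat.mod_lt _ hm0, (hmmod i).symm⟩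
  have hP1 : μ P = 1 := by rw [hPO]; exact hO1
  -- all singletons in the orbit have the same measure
  have hsame : ∀ i : ℕ, μ {f^[i] x} = μ {x} := by
    intro i
    induction i with
    | zero => simp
    | succ i ih =>
      have hpre : f ⁻¹' {f^[i + 1] x} = {f^[i] x} := by
        ext y
        simp only [mem_preimage, mem_singleton_iff, Function.iterate_succ_apply']
        exact hbij.injective.eq_iff
      rw [← hinv.measure_preimage (measurableSet_singleton _).nullMeasurableSet, hpre, ih]
  -- P is a disjoint union of m singletons
  have hPunion : P = ⋃ i ∈ Finset.range m, {f^[i] x} := by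
    ext q
    simp only [hP_def, mem_setOf_eq, mem_iUnion, Finset.mem_range, mem_singleton_iff]
    constructor
    · rintro ⟨i, hi, rfl⟩; exact ⟨i, hi, rfl⟩
    · rintro ⟨i, hi, rfl⟩; exact ⟨i, hi, rfl⟩
  have hinj : ∀ i ∈ Finset.range m, ∀ j ∈ Finset.range m, i ≠ j → f^[i] x ≠ f^[j] x := by
    intro i hi j hj hij
    intro h
    exact hij (Function.iterate_injOn_Iio_minimalPeriod
      (Finset.mem_range.1 hi) (Finset.mem_range.1 hj) h)
  have hsum : μ P = ∑ i ∈ Finset.range m, μ {f^[i] x} := by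
    rw [hPunion]
    apply measure_biUnion_finset
    · intro i hi j hj hij
      simp only [Function.onFun, disjoint_singleton]
      exact hinj i hi j hj hij
    · exact fun i _ => measurableSet_singleton _
  have hmx : (m : ℝ≥0∞) * μ {x} = 1 := by
    have : ∑ i ∈ Finset.range m, μ {f^[i] x} = m * μ {x} := by
      rw [Finset.sum_congr rfl fun i _ => hsame i]
      simp [Finset.sum_const, nsmul_eq_mul]
    rw [← this, ← hsum, hP1]
  have hmne : (m : ℝ≥0∞) ≠ 0 := by
    simp only [ne_eq, Nat.cast_eq_zero]; omega
  have hmnetop : (m : ℝ≥0∞) ≠ ⊤ := ENNReal.natCast_ne_top m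
  have hxval : μ {x} = (m : ℝ≥0∞)⁻¹ := by
    have := congrArg (fun a => (m : ℝ≥0∞)⁻¹ * a) hmx
    simp only [← mul_assoc, ENNReal.inv_mul_cancel hmne hmnetop, one_mul, mul_one] at this
    exact this
  refine ⟨x, m, hm0, Function.isPeriodicPt_minimalPeriod f x, hP1, ?_⟩
  intro i _
  rw [hsame i, hxval]
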